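/- Every Lindelöf space of cardinality strictly less than the dominating number 𝔡 is Menger. -/

import Mathlib

def Menger (X : Type*) [TopologicalSpace X] : Prop :=
  ∀ U : ℕ → Set (Set X), (∀ n, ∀ u ∈ U n, IsOpen u) → (∀ n, ⋃₀ U n = Set.univ) →
    ∃ V : ℕ → Set (Set X), (∀ n, V n ⊆ U n) ∧ (∀ n, (V n).Finite) ∧
      ⋃ n, ⋃₀ V n = Set.univ

/-- The dominating number 𝔡: the least cardinality of a family D ⊆ ω^ω such that every
f ∈ ω^ω is eventually dominated by some g ∈ D. -/
noncomputable def dominatingNumber : Cardinal :=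
  sInf {c | ∃ D : Set (ℕ → ℕ), Cardinal.mk D = c ∧
    ∀ f : ℕ → ℕ, ∃ g ∈ D, ∀ᶠ n in Filter.atTop, f n ≤ g n}

/-- Every Lindelöf space of cardinality < 𝔡 is Menger. -/
theorem lindelof_small_menger (X : Type) [TopologicalSpace X] [LindelofSpace X]
    (h : Cardinal.mk X < dominatingNumber) : Menger X := by
  intro U hopen hcov
  rcases isEmpty_or_nonempty X with hX | hX
  · refine ⟨fun _ => ∅, fun n => Set.empty_subset _, fun n => Set.finite_empty, ?_⟩
    have : (Set.univ : Set X) = ∅ := Set.univ_eq_empty_iff.mpr hX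
    simp [this]
  · -- countable subcovers indexed by ℕ
    have hsub : ∀ n, ∃ u : ℕ → Set X, (∀ k, u k ∈ U n) ∧ ⋃ k, u k = Set.univ := by
      intro n
      have hcov' : (Set.univ : Set X) ⊆ ⋃ s ∈ U n, s := by
        rw [← Set.sUnion_eq_biUnion, hcov n]
      obtain ⟨b', hb'sub, hb'count, hb'cov⟩ :=
        isLindelof_univ.elim_countable_subcover_image (fun s _ => hopen n s ‹_›) hcov'
      have hb'ne : b'.Nonempty := by
        by_contra hne
        rw [Set.not_nonempty_iff_eq_empty] at hne
        obtain ⟨x⟩ := hX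
        have := hb'cov (Set.mem_univ x)
        simp [hne] at this
      obtain ⟨e, he⟩ := Set.Countable.exists_eq_range hb'count hb'ne
      refine ⟨e, fun k => hb'sub (by rw [he]; exact Set.mem_range_self k), ?_⟩
      apply Set.eq_univ_of_univ_subset
      intro x hx
      have := hb'cov hx
      rw [he] at this
      simpa using this
    choose u hu hucov using hsub
    have hex : ∀ x : X, ∀ n : ℕ, ∃ k, x ∈ u n k := by
      intro x n
      have := (hucov n).symm ▸ Set.mem_univ x
      simpa using this
    classical
    let F : X → ℕ → ℕ := fun x n => Nat.find (hex x n)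
    -- range F is not dominating
    have hnd : ¬ (∀ f : ℕ → ℕ, ∃ g ∈ Set.range F, ∀ᶠ n in Filter.atTop, f n ≤ g n) := by
      intro hd
      have : dominatingNumber ≤ Cardinal.mk (Set.range F) :=
        csInf_le (OrderBot.bddBelow _) ⟨Set.range F, rfl, hd⟩
      exact absurd (this.trans Cardinal.mk_range_le) (not_le.mpr h)
    push_neg at hnd
    obtain ⟨g, hg⟩ := hnd
    refine ⟨fun n => u n '' Set.Iic (g n), fun n => ?_, fun n => (Set.finite_Iic _).image _, ?_⟩
    · rintro s ⟨k, _, rfl⟩; exact hu n k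
    · apply Set.eq_univ_of_univ_subset
      intro x _
      have hgx := hg (F x) ⟨x, rfl⟩
      simp only [← not_le] at hgx
      obtain ⟨n, hn⟩ := hgx.exists
      push_neg at hn
      refine Set.mem_iUnion.mpr ⟨n, ⟨u n (F x n), ⟨F x n, le_of_lt hn, rfl⟩, ?_⟩⟩
      exact Nat.find_spec (hex x n)
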